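/- Uniform bound on the regularized posterior second moment: for ρ ∈ (0, 1], all (x1, x2), and n ≥ 2πσ1σ2 e^{1/e}, Σ_j (t_{j1} − x1)² p(x1,x2; t_{j1}, t_{j2}) / (ρ + Σ_j p(x1,x2; t_{j1}, t_{j2})) ≤ (2σ1²/ρ) log(n/(2πσ1σ2)), where the sum is over j = 1, …, n. -/

import Mathlib

open Real

/-- Standard normal density. -/
noncomputable def gphi (x : ℝ) : ℝ := (Real.sqrt (2 * Real.pi))⁻¹ * Real.exp (-x ^ 2 / 2)

/-- Joint density of two independent normals with means `(t1, t2)` and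
standard deviations `(σ1, σ2)`. -/
noncomputable def pdens (σ1 σ2 t1 t2 x1 x2 : ℝ) : ℝ :=
  gphi ((x1 - t1) / σ1) * gphi ((x2 - t2) / σ2) / (σ1 * σ2)

lemma gphi_pos (x : ℝ) : 0 < gphi x := by
  unfold gphi
  have : (0:ℝ) < Real.sqrt (2 * Real.pi) := Real.sqrt_pos.mpr (by positivity)
  positivity

lemma neg_mul_log_le (y : ℝ) (hy : 0 < y) : -(y * Real.log y) ≤ (Real.exp 1)⁻¹ := by
  have he : (0:ℝ) < Real.exp 1 := Real.exp_pos 1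
  have h := Real.log_le_sub_one_of_pos (x := (Real.exp 1 * y)⁻¹) (by positivity)
  rw [Real.log_inv, Real.log_mul he.ne' hy.ne', Real.log_exp] at h
  have h2 : -Real.log y ≤ (Real.exp 1 * y)⁻¹ := by linarith
  have h3 := mul_le_mul_of_nonneg_left h2 hy.le
  have h4 : y * (Real.exp 1 * y)⁻¹ = (Real.exp 1)⁻¹ := by
    field_simp
  linarith [h3, h4.le, h4.ge]

/-- Uniform bound on the regularized posterior second moment: for `ρ ∈ (0,1]`,
all `(x1, x2)`, and `n ≥ 2πσ1σ2 e^{1/e}`,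
`Σ_j (t_{j1}−x1)² p_j / (ρ + Σ_j p_j) ≤ (2σ1²/ρ) log(n/(2πσ1σ2))`. -/
theorem stmt12 (n : ℕ) (σ1 σ2 ρ : ℝ) (hσ1 : 0 < σ1) (hσ2 : 0 < σ2)
    (hρ0 : 0 < ρ) (hρ1 : ρ ≤ 1)
    (hn : 2 * Real.pi * σ1 * σ2 * Real.exp ((Real.exp 1)⁻¹) ≤ (n : ℝ))
    (t : Fin n → Fin 2 → ℝ) (x1 x2 : ℝ) :
    (∑ j : Fin n, (t j 0 - x1) ^ 2 * pdens σ1 σ2 (t j 0) (t j 1) x1 x2) /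
        (ρ + ∑ j : Fin n, pdens σ1 σ2 (t j 0) (t j 1) x1 x2) ≤
      2 * σ1 ^ 2 / ρ * Real.log ((n : ℝ) / (2 * Real.pi * σ1 * σ2)) := by
  have hπ : (0:ℝ) < Real.pi := Real.pi_pos
  set q : ℝ := 2 * Real.pi * σ1 * σ2 with hq_def
  have hq : 0 < q := by positivity
  set p : Fin n → ℝ := fun j => pdens σ1 σ2 (t j 0) (t j 1) x1 x2 with hp_def
  have hp : ∀ j, 0 < p j := fun j =>
    div_pos (mul_pos (gphi_pos _) (gphi_pos _)) (mul_pos hσ1 hσ2)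
  -- n is positive
  have hqe : (0:ℝ) < q * Real.exp ((Real.exp 1)⁻¹) := by positivity
  have hn0 : 0 < n := by
    rcases Nat.eq_zero_or_pos n with h | h
    · subst h
      norm_num at hn
      linarith
    · exact h
  have hnn : (0:ℝ) < (n:ℝ) := by exact_mod_cast hn0
  set y : ℝ := ∑ j : Fin n, p j with hy_def
  have hne : (Finset.univ : Finset (Fin n)).Nonempty := by
    have : Nonempty (Fin n) := Fin.pos_iff_nonempty.mp hn0
    exact Finset.univ_nonempty
  have hy : 0 < y := Finset.sum_pos (fun j _ => hp j) hne
  set L : ℝ := Real.log ((n:ℝ) / q) with hL_def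
  have hL : (Real.exp 1)⁻¹ ≤ L := by
    rw [hL_def, Real.le_log_iff_exp_le (by positivity)]
    rw [le_div_iff₀ hq]
    linarith [hn]
  have hLpos : 0 < L := lt_of_lt_of_le (by positivity) hL
  -- product form of q * p j
  have key_eq : ∀ j, q * p j =
      Real.exp (-((x1 - t j 0) / σ1) ^ 2 / 2) * Real.exp (-((x2 - t j 1) / σ2) ^ 2 / 2) := by
    intro j
    have hs0 : (0:ℝ) < Real.sqrt (2 * Real.pi) := Real.sqrt_pos.mpr (by positivity)
    simp only [hp_def, pdens, gphi, hq_def]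
    set s : ℝ := Real.sqrt (2 * Real.pi) with hs_def
    have hs : s * s = 2 * Real.pi := Real.mul_self_sqrt (by positivity)
    set E1 : ℝ := Real.exp (-((x1 - t j 0) / σ1) ^ 2 / 2)
    set E2 : ℝ := Real.exp (-((x2 - t j 1) / σ2) ^ 2 / 2)
    field_simp
    linear_combination (-(E1 * E2)) * hs
  -- pointwise bound on the squared deviation
  have hsq : ∀ j, ((x1 - t j 0) / σ1) ^ 2 ≤ 2 * Real.log ((q * p j)⁻¹) := by
    intro j
    have hE2 : Real.exp (-((x2 - t j 1) / σ2) ^ 2 / 2) ≤ 1 := by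
      rw [Real.exp_le_one_iff]
      nlinarith [sq_nonneg ((x2 - t j 1) / σ2)]
    have h1 : q * p j ≤ Real.exp (-((x1 - t j 0) / σ1) ^ 2 / 2) := by
      rw [key_eq j]
      nlinarith [Real.exp_pos (-((x1 - t j 0) / σ1) ^ 2 / 2)]
    have h2 : Real.log (q * p j) ≤ -((x1 - t j 0) / σ1) ^ 2 / 2 := by
      calc Real.log (q * p j) ≤ Real.log (Real.exp (-((x1 - t j 0) / σ1) ^ 2 / 2)) :=
            Real.log_le_log (mul_pos hq (hp j)) h1
        _ = -((x1 - t j 0) / σ1) ^ 2 / 2 := Real.log_exp _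
    rw [Real.log_inv]
    linarith
  -- numerator bound, term by term
  have hterm : ∀ j, (t j 0 - x1) ^ 2 * p j ≤ 2 * σ1 ^ 2 * (p j * Real.log ((q * p j)⁻¹)) := by
    intro j
    have he : (t j 0 - x1) ^ 2 = σ1 ^ 2 * ((x1 - t j 0) / σ1) ^ 2 := by
      field_simp
      ring
    rw [he]
    have h1 := mul_le_mul_of_nonneg_left (hsq j) (le_of_lt (hp j))
    nlinarith [sq_nonneg σ1, hp j]
  -- Gibbs step
  have hgibbs : ∑ j : Fin n, p j * Real.log ((q * p j)⁻¹) ≤ y * Real.log ((n:ℝ) / (q * y)) := by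
    have hdecomp : ∀ j : Fin n, p j * Real.log ((q * p j)⁻¹) =
        p j * Real.log (y / ((n:ℝ) * p j)) + p j * Real.log ((n:ℝ) / (q * y)) := by
      intro j
      have hA : y / ((n:ℝ) * p j) ≠ 0 := (div_pos hy (mul_pos hnn (hp j))).ne'
      have hB : (n:ℝ) / (q * y) ≠ 0 := (div_pos hnn (mul_pos hq hy)).ne'
      have hprod : (q * p j)⁻¹ = y / ((n:ℝ) * p j) * ((n:ℝ) / (q * y)) := by
        have h1 : p j ≠ 0 := (hp j).ne'
        have h2 : (n:ℝ) ≠ 0 := hnn.ne'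
        have h3 : y ≠ 0 := hy.ne'
        have h4 : q ≠ 0 := hq.ne'
        field_simp
      rw [hprod, Real.log_mul hA hB, mul_add]
    rw [Finset.sum_congr rfl (fun j _ => hdecomp j), Finset.sum_add_distrib]
    have h1 : ∑ j : Fin n, p j * Real.log (y / ((n:ℝ) * p j)) ≤ 0 := by
      have hb : ∀ j : Fin n, p j * Real.log (y / ((n:ℝ) * p j)) ≤ y / (n:ℝ) - p j := by
        intro j
        have hl := Real.log_le_sub_one_of_pos (div_pos hy (mul_pos hnn (hp j)))
        have hm := mul_le_mul_of_nonneg_left hl (hp j).le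
        have heq : p j * (y / ((n:ℝ) * p j) - 1) = y / (n:ℝ) - p j := by
          have h1 : p j ≠ 0 := (hp j).ne'
          have h2 : (n:ℝ) ≠ 0 := hnn.ne'
          field_simp
        linarith [heq.le, heq.ge]
      calc ∑ j : Fin n, p j * Real.log (y / ((n:ℝ) * p j))
          ≤ ∑ j : Fin n, (y / (n:ℝ) - p j) := Finset.sum_le_sum (fun j _ => hb j)
        _ = 0 := by
            rw [Finset.sum_sub_distrib, Finset.sum_const, ← hy_def]
            simp only [Finset.card_univ, Fintype.card_fin, nsmul_eq_mul]
            field_simp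
            ring
    have h2 : ∑ j : Fin n, p j * Real.log ((n:ℝ) / (q * y)) =
        y * Real.log ((n:ℝ) / (q * y)) := by
      rw [← Finset.sum_mul, ← hy_def]
    linarith
  -- rewrite log(n/(q*y)) = L - log y
  have hsplit : Real.log ((n:ℝ) / (q * y)) = L - Real.log y := by
    rw [hL_def, ← Real.log_div (by positivity) hy.ne']
    congr 1
    field_simp
  -- total numerator bound
  have hnum : (∑ j : Fin n, (t j 0 - x1) ^ 2 * p j) ≤
      2 * σ1 ^ 2 * (y * L - y * Real.log y) := by
    have hc := Finset.sum_le_sum (fun j (_ : j ∈ Finset.univ) => hterm j)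
    rw [← Finset.mul_sum] at hc
    have hg := mul_le_mul_of_nonneg_left hgibbs (by positivity : (0:ℝ) ≤ 2 * σ1 ^ 2)
    rw [hsplit] at hg
    calc (∑ j : Fin n, (t j 0 - x1) ^ 2 * p j)
        ≤ 2 * σ1 ^ 2 * ∑ j : Fin n, p j * Real.log ((q * p j)⁻¹) := hc
      _ ≤ 2 * σ1 ^ 2 * (y * (L - Real.log y)) := hg
      _ = 2 * σ1 ^ 2 * (y * L - y * Real.log y) := by ring
  -- final combination
  have hylog : -(y * Real.log y) ≤ (Real.exp 1)⁻¹ := neg_mul_log_le y hy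
  have hρy : 0 < ρ + y := by linarith
  rw [div_le_iff₀ hρy, div_mul_eq_mul_div, div_mul_eq_mul_div, le_div_iff₀ hρ0]
  have hkey : ρ * (y * L - y * Real.log y) ≤ L * (ρ + y) := by
    have f1 := mul_le_mul_of_nonneg_left hρ1 (mul_pos hy hLpos).le
    have f2 := mul_le_mul_of_nonneg_left (le_trans hylog hL) hρ0.le
    nlinarith [f1, f2]
  have h2σ : (0:ℝ) ≤ 2 * σ1 ^ 2 := by positivity
  calc (∑ j : Fin n, (t j 0 - x1) ^ 2 * p j) * ρ
      ≤ 2 * σ1 ^ 2 * (y * L - y * Real.log y) * ρ :=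
        mul_le_mul_of_nonneg_right hnum hρ0.le
    _ = 2 * σ1 ^ 2 * (ρ * (y * L - y * Real.log y)) := by ring
    _ ≤ 2 * σ1 ^ 2 * (L * (ρ + y)) := mul_le_mul_of_nonneg_left hkey h2σ
    _ = 2 * σ1 ^ 2 * L * (ρ + y) := by ring
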